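/- If char F = p > 0, then A₁ is a free module over its center Z(A₁) = F[x^p, y^p] with basis {x^i y^j : 0 ≤ i, j < p}. -/

import Mathlib

/-- The defining relation of the Weyl algebra: `y * x = x * y + 1`. -/
inductive WeylRel (F : Type) [Field F] :
    FreeAlgebra F (Fin 2) → FreeAlgebra F (Fin 2) → Prop
  | rel : WeylRel F (FreeAlgebra.ι F 1 * FreeAlgebra.ι F 0)
      (FreeAlgebra.ι F 0 * FreeAlgebra.ι F 1 + 1)

/-- The Weyl algebra A₁ over `F`. -/
abbrev Weyl (F : Type) [Field F] := RingQuot (WeylRel F)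

/-- The generator `x` of the Weyl algebra. -/
noncomputable def Wx (F : Type) [Field F] : Weyl F :=
  RingQuot.mkAlgHom F (WeylRel F) (FreeAlgebra.ι F 0)

/-- The generator `y` of the Weyl algebra. -/
noncomputable def Wy (F : Type) [Field F] : Weyl F :=
  RingQuot.mkAlgHom F (WeylRel F) (FreeAlgebra.ι F 1)

/-- `V = F`-span of `{x, y}` inside the Weyl algebra. -/
noncomputable def WV (F : Type) [Field F] : Submodule F (Weyl F) :=
  Submodule.span F {Wx F, Wy F}

noncomputable def myBasis {ι R M : Type*} [Semiring R] [AddCommMonoid M] [Module R M]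
    {v : ι → M} (li : LinearIndependent R v)
    (sp : ⊤ ≤ Submodule.span R (Set.range v)) : Module.Basis ι R M :=
  Module.Basis.ofRepr (LinearEquiv.symm (LinearEquiv.ofBijective (Finsupp.linearCombination R v)
    ⟨li, by
      rw [← LinearMap.range_eq_top, Finsupp.range_linearCombination]
      exact top_le_iff.mp sp⟩))

lemma myBasis_apply {ι R M : Type*} [Semiring R] [AddCommMonoid M] [Module R M]
    {v : ι → M} (li : LinearIndependent R v)
    (sp : ⊤ ≤ Submodule.span R (Set.range v)) (i : ι) : myBasis li sp i = v i := by
  have h1 : (myBasis li sp).repr (myBasis li sp i) = Finsupp.single i 1 :=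
    Module.Basis.repr_self _ i
  have h2 : (myBasis li sp).repr (v i) = Finsupp.single i 1 := by
    show (LinearEquiv.ofBijective (Finsupp.linearCombination R v) _).symm (v i) = _
    rw [LinearEquiv.symm_apply_eq]
    show v i = Finsupp.linearCombination R v (Finsupp.single i 1)
    rw [Finsupp.linearCombination_single, one_smul]
  exact (myBasis li sp).repr.injective (h1.trans h2.symm)

namespace WeylAux
open MvPolynomial
variable (F : Type) [Field F]

noncomputable abbrev R2 := MvPolynomial (Fin 2) F

noncomputable def opX : Module.End F (R2 F) := LinearMap.mulLeft F (X 0)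
noncomputable def opD : Module.End F (R2 F) :=
  (pderiv (0 : Fin 2)).toLinearMap + LinearMap.mulLeft F (X 1)

lemma opD_opX : opD F * opX F = opX F * opD F + 1 := by
  apply LinearMap.ext; intro f
  simp only [opD, opX, Module.End.mul_apply, LinearMap.add_apply, LinearMap.mulLeft_apply,
    Derivation.coeFn_coe, Module.End.one_apply]
  rw [Derivation.leibniz]
  simp only [pderiv_X_self, smul_eq_mul]
  ring

noncomputable def rep : Weyl F →ₐ[F] Module.End F (R2 F) :=
  RingQuot.liftAlgHom F ⟨FreeAlgebra.lift F ![opX F, opD F], by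
    rintro a b ⟨⟩
    simp only [map_mul, map_add, map_one, FreeAlgebra.lift_ι_apply,
      Matrix.cons_val_zero, Matrix.cons_val_one, Matrix.head_cons]
    exact opD_opX F⟩

lemma rep_x : rep F (Wx F) = opX F := by
  rw [Wx, rep, RingQuot.liftAlgHom_mkAlgHom_apply]
  simp [FreeAlgebra.lift_ι_apply]

lemma rep_y : rep F (Wy F) = opD F := by
  rw [Wy, rep, RingQuot.liftAlgHom_mkAlgHom_apply]
  simp [FreeAlgebra.lift_ι_apply]

noncomputable def ev : Weyl F →ₗ[F] R2 F where
  toFun w := rep F w 1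
  map_add' a b := by simp
  map_smul' a b := by simp

/-- monomials of the Weyl algebra -/
noncomputable def monW : ℕ × ℕ → Weyl F := fun k => Wx F ^ k.1 * Wy F ^ k.2

lemma opD_pow_one (j : ℕ) : (opD F ^ j) 1 = (X 1 : R2 F) ^ j := by
  induction j with
  | zero => simp
  | succ n ih =>
      rw [pow_succ', Module.End.mul_apply, ih, opD]
      simp only [LinearMap.add_apply, Derivation.coeFn_coe, LinearMap.mulLeft_apply]
      rw [Derivation.leibniz_pow]
      simp [pow_succ, mul_comm]

lemma opX_pow_apply (i : ℕ) (f : R2 F) : (opX F ^ i) f = (X 0 : R2 F) ^ i * f := by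
  induction i generalizing f with
  | zero => simp
  | succ n ih =>
      rw [pow_succ', Module.End.mul_apply, ih, opX, LinearMap.mulLeft_apply, pow_succ']; ring

lemma ev_monW (k : ℕ × ℕ) : ev F (monW F k) = (X 0 : R2 F) ^ k.1 * (X 1) ^ k.2 := by
  show rep F (monW F k) 1 = _
  rw [monW, map_mul, map_pow, map_pow, rep_x, rep_y, Module.End.mul_apply, opD_pow_one,
    opX_pow_apply]

lemma li_monW : LinearIndependent F (monW F) := by
  have h1 : LinearIndependent F (fun k : ℕ × ℕ => (X 0 : R2 F) ^ k.1 * (X 1) ^ k.2) := by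
    have hinj : Function.Injective
        (fun k : ℕ × ℕ => (Finsupp.single (0:Fin 2) k.1 + Finsupp.single 1 k.2)) := by
      intro a b hab
      have h0 := congrArg (fun f => f 0) hab
      have h1 := congrArg (fun f => f 1) hab
      simp [Finsupp.single_apply] at h0 h1
      exact Prod.ext h0 h1
    have := ((basisMonomials (Fin 2) F).linearIndependent).comp _ hinj
    convert this using 1
    funext k
    rw [coe_basisMonomials]
    simp only [Function.comp]
    rw [X_pow_eq_monomial, X_pow_eq_monomial, monomial_mul, one_mul]
    all_goals rfl
  have : LinearIndependent F (ev F ∘ monW F) := by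
    convert h1 using 1
    funext k
    exact ev_monW F k
  exact LinearIndependent.of_comp (ev F) this

lemma wcomm : Wy F * Wx F = Wx F * Wy F + 1 := by
  have := RingQuot.mkAlgHom_rel F (WeylRel.rel (F := F))
  simpa only [map_mul, map_add, map_one, Wx, Wy] using this

lemma y_mul_xpow (n : ℕ) :
    Wy F * Wx F ^ (n + 1) = Wx F ^ (n + 1) * Wy F + (n + 1) • Wx F ^ n := by
  induction n with
  | zero => simpa using wcomm F
  | succ n ih =>
      have : Wy F * Wx F ^ (n + 2) = (Wy F * Wx F ^ (n + 1)) * Wx F := by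
        rw [mul_assoc, ← pow_succ]
      rw [this, ih, add_mul, mul_assoc, wcomm F, smul_mul_assoc, ← pow_succ]
      rw [mul_add, ← mul_assoc, ← pow_succ, mul_one]
      simp only [succ_nsmul]
      abel

lemma ypow_mul_x (n : ℕ) :
    Wy F ^ (n + 1) * Wx F = Wx F * Wy F ^ (n + 1) + (n + 1) • Wy F ^ n := by
  induction n with
  | zero => simpa using wcomm F
  | succ n ih =>
      have : Wy F ^ (n + 2) * Wx F = Wy F * (Wy F ^ (n + 1) * Wx F) := by
        rw [← mul_assoc, ← pow_succ']
      rw [this, ih, mul_add, ← mul_assoc, wcomm F, mul_smul_comm, ← pow_succ']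
      rw [add_mul, one_mul, mul_assoc, ← pow_succ']
      simp only [succ_nsmul]
      abel

lemma monW_zero : monW F (0, 0) = 1 := by simp [monW]

lemma x_mul_monW (k : ℕ × ℕ) : Wx F * monW F k = monW F (k.1 + 1, k.2) := by
  rw [monW, monW, ← mul_assoc, ← pow_succ']

lemma y_mul_monW (k : ℕ × ℕ) :
    Wy F * monW F k = monW F (k.1, k.2 + 1) + k.1 • monW F (k.1 - 1, k.2) := by
  obtain ⟨i, j⟩ := k
  cases i with
  | zero => simp [monW, ← mul_assoc, ← pow_succ']
  | succ n =>
      show Wy F * (Wx F ^ (n+1) * Wy F ^ j) = _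
      rw [← mul_assoc, y_mul_xpow F n, add_mul, smul_mul_assoc, mul_assoc, ← pow_succ']
      simp only [monW]
      norm_num

/-- the F-span of the Weyl monomials -/
noncomputable def SW : Submodule F (Weyl F) := Submodule.span F (Set.range (monW F))

lemma x_mul_mem {s : Weyl F} (hs : s ∈ SW F) : Wx F * s ∈ SW F := by
  induction hs using Submodule.span_induction with
  | mem w hw =>
      obtain ⟨k, rfl⟩ := hw
      rw [x_mul_monW]
      exact Submodule.subset_span ⟨_, rfl⟩
  | zero => simpa using (SW F).zero_mem
  | add a b _ _ ha hb => rw [mul_add]; exact (SW F).add_mem ha hb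
  | smul c a _ ha => rw [mul_smul_comm]; exact (SW F).smul_mem c ha

lemma y_mul_mem {s : Weyl F} (hs : s ∈ SW F) : Wy F * s ∈ SW F := by
  induction hs using Submodule.span_induction with
  | mem w hw =>
      obtain ⟨k, rfl⟩ := hw
      rw [y_mul_monW]
      exact (SW F).add_mem (Submodule.subset_span ⟨_, rfl⟩)
        ((SW F).smul_mem _ (Submodule.subset_span ⟨_, rfl⟩))
  | zero => simpa using (SW F).zero_mem
  | add a b _ _ ha hb => rw [mul_add]; exact (SW F).add_mem ha hb
  | smul c a _ ha => rw [mul_smul_comm]; exact (SW F).smul_mem c ha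

lemma SW_top : SW F = ⊤ := by
  rw [eq_top_iff]
  rintro w -
  obtain ⟨a, rfl⟩ := RingQuot.mkAlgHom_surjective F (WeylRel F) w
  have key : ∀ a : FreeAlgebra F (Fin 2), ∀ s ∈ SW F,
      RingQuot.mkAlgHom F (WeylRel F) a * s ∈ SW F := by
    intro a
    induction a using FreeAlgebra.induction with
    | grade0 r =>
        intro s hs
        rw [AlgHom.commutes, ← Algebra.smul_def]
        exact (SW F).smul_mem r hs
    | grade1 i =>
        intro s hs
        fin_cases i
        · exact x_mul_mem F hs
        · exact y_mul_mem F hs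
    | mul a b ha hb =>
        intro s hs
        rw [map_mul, mul_assoc]
        exact ha _ (hb _ hs)
    | add a b ha hb =>
        intro s hs
        rw [map_add, add_mul]
        exact (SW F).add_mem (ha _ hs) (hb _ hs)
  have h1 : (1 : Weyl F) ∈ SW F := monW_zero F ▸ Submodule.subset_span ⟨_, rfl⟩
  simpa using key a 1 h1

/-- The F-basis of the Weyl algebra given by monomials. -/
noncomputable def bF : Module.Basis (ℕ × ℕ) F (Weyl F) :=
  Module.Basis.mk (li_monW F) (by rw [show Submodule.span F (Set.range (monW F)) = SW F from rfl, SW_top])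

lemma bF_apply (k : ℕ × ℕ) : bF F k = monW F k := by rw [bF, Module.Basis.mk_apply]

lemma bF_repr_monW (k : ℕ × ℕ) : (bF F).repr (monW F k) = Finsupp.single k 1 := by
  rw [← bF_apply, Module.Basis.repr_self]

lemma adjoin_xy_top : Algebra.adjoin F {Wx F, Wy F} = ⊤ := by
  rw [eq_top_iff]
  rintro w -
  obtain ⟨a, rfl⟩ := RingQuot.mkAlgHom_surjective F (WeylRel F) w
  induction a using FreeAlgebra.induction with
  | grade0 r => rw [AlgHom.commutes]; exact Subalgebra.algebraMap_mem _ r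
  | grade1 i =>
      fin_cases i
      · exact Algebra.subset_adjoin (by left; rfl)
      · exact Algebra.subset_adjoin (by right; rfl)
  | mul a b ha hb => rw [map_mul]; exact mul_mem ha hb
  | add a b ha hb => rw [map_add]; exact add_mem ha hb

variable (p : ℕ) [CharP F p]

lemma p_cast_zero : (p : Weyl F) = 0 := by
  rw [← map_natCast (algebraMap F (Weyl F)) p, CharP.cast_eq_zero, map_zero]

lemma p_nsmul_zero (w : Weyl F) : p • w = 0 := by
  rw [nsmul_eq_mul, p_cast_zero, zero_mul]

lemma xp_central (hp : p ≠ 0) : Wx F ^ p ∈ Subalgebra.center F (Weyl F) := by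
  obtain ⟨m, rfl⟩ := Nat.exists_eq_succ_of_ne_zero hp
  rw [Subalgebra.mem_center_iff]
  intro b
  have hb : b ∈ Algebra.adjoin F {Wx F, Wy F} := by rw [adjoin_xy_top]; trivial
  induction hb using Algebra.adjoin_induction with
  | mem w hw =>
      rcases hw with rfl | rfl
      · rw [← pow_succ, ← pow_succ']
      · rw [y_mul_xpow, p_nsmul_zero, add_zero]
  | algebraMap r => rw [← Algebra.commutes]
  | add a b _ _ ha hb => rw [add_mul, mul_add, ha, hb]
  | mul a b _ _ ha hb => rw [mul_assoc, hb, ← mul_assoc, ha, mul_assoc]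

lemma yp_central (hp : p ≠ 0) : Wy F ^ p ∈ Subalgebra.center F (Weyl F) := by
  obtain ⟨m, rfl⟩ := Nat.exists_eq_succ_of_ne_zero hp
  rw [Subalgebra.mem_center_iff]
  intro b
  have hb : b ∈ Algebra.adjoin F {Wx F, Wy F} := by rw [adjoin_xy_top]; trivial
  induction hb using Algebra.adjoin_induction with
  | mem w hw =>
      rcases hw with rfl | rfl
      · rw [ypow_mul_x, p_nsmul_zero, add_zero]
      · rw [← pow_succ, ← pow_succ']
  | algebraMap r => rw [← Algebra.commutes]
  | add a b _ _ ha hb => rw [add_mul, mul_add, ha, hb]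
  | mul a b _ _ ha hb => rw [mul_assoc, hb, ← mul_assoc, ha, mul_assoc]

lemma monWp_central (hp : p ≠ 0) (a b : ℕ) :
    monW F (p * a, p * b) ∈ Subalgebra.center F (Weyl F) := by
  have : monW F (p * a, p * b) = (Wx F ^ p) ^ a * (Wy F ^ p) ^ b := by
    rw [monW, ← pow_mul, ← pow_mul]
  rw [this]
  exact mul_mem (pow_mem (xp_central F p hp) a) (pow_mem (yp_central F p hp) b)

lemma adjoin_le_center (hp : p ≠ 0) :
    Algebra.adjoin F {Wx F ^ p, Wy F ^ p} ≤ Subalgebra.center F (Weyl F) := by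
  apply Algebra.adjoin_le
  rintro w (rfl | rfl)
  · exact xp_central F p hp
  · exact yp_central F p hp

lemma comm_x (k : ℕ × ℕ) :
    monW F k * Wx F - Wx F * monW F k = (k.2 : F) • monW F (k.1, k.2 - 1) := by
  obtain ⟨i, j⟩ := k
  cases j with
  | zero =>
      show Wx F ^ i * Wy F ^ 0 * Wx F - Wx F * (Wx F ^ i * Wy F ^ 0) = _
      rw [pow_zero, mul_one, ← pow_succ, ← pow_succ']
      simp
  | succ m =>
      show Wx F ^ i * Wy F ^ (m + 1) * Wx F - Wx F * (Wx F ^ i * Wy F ^ (m + 1)) = _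
      rw [mul_assoc, ypow_mul_x, mul_add, ← mul_assoc, ← mul_assoc, ← pow_succ, ← pow_succ',
        mul_smul_comm]
      have : (m + 1) • (Wx F ^ i * Wy F ^ m) = ((m + 1 : ℕ) : F) • (Wx F ^ i * Wy F ^ m) := by
        rw [Nat.cast_smul_eq_nsmul]
      simp only [monW, Nat.add_sub_cancel]
      rw [← this]
      abel

lemma comm_y (k : ℕ × ℕ) :
    Wy F * monW F k - monW F k * Wy F = (k.1 : F) • monW F (k.1 - 1, k.2) := by
  have h1 : monW F k * Wy F = monW F (k.1, k.2 + 1) := by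
    rw [monW, monW, mul_assoc, ← pow_succ]
  rw [y_mul_monW, h1, add_sub_cancel_left, Nat.cast_smul_eq_nsmul]

lemma repr_sum_eval (s : Finset (ℕ × ℕ)) (g : ℕ × ℕ → F) (σ : ℕ × ℕ → ℕ × ℕ) (m : ℕ × ℕ) :
    ((bF F).repr (∑ k ∈ s, g k • monW F (σ k))) m
      = ∑ k ∈ s, (if σ k = m then g k else 0) := by
  rw [map_sum, Finsupp.finset_sum_apply]
  refine Finset.sum_congr rfl fun k _ => ?_
  rw [map_smul, bF_repr_monW, Finsupp.smul_apply, Finsupp.single_apply, smul_eq_mul]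
  split <;> simp

lemma repr_expand (z : Weyl F) :
    z = ∑ m ∈ ((bF F).repr z).support, ((bF F).repr z) m • monW F m := by
  conv_lhs => rw [← Module.Basis.linearCombination_repr (bF F) z]
  rw [Finsupp.linearCombination_apply, Finsupp.sum]
  exact Finset.sum_congr rfl fun m _ => by rw [bF_apply]

lemma central_coeff_x {z : Weyl F} (hz : ∀ b, b * z = z * b) (k : ℕ × ℕ)
    (hk : ((bF F).repr z) k ≠ 0) : p ∣ k.2 := by
  by_cases h0 : k.2 = 0
  · simp [h0]
  rw [← CharP.cast_eq_zero_iff F p]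
  by_contra hc
  set c := (bF F).repr z with hc_def
  have h1 : (0 : Weyl F)
      = ∑ m ∈ c.support, (c m * (m.2 : F)) • monW F (m.1, m.2 - 1) := by
    have e0 : (0 : Weyl F) = z * Wx F - Wx F * z := by rw [hz (Wx F), sub_self]
    rw [e0]
    conv_lhs => rw [repr_expand F z]
    rw [Finset.sum_mul, Finset.mul_sum, ← Finset.sum_sub_distrib]
    refine Finset.sum_congr rfl fun m _ => ?_
    rw [smul_mul_assoc, mul_smul_comm,
      ← smul_sub (((bF F).repr z) m) (monW F m * Wx F) (Wx F * monW F m), comm_x, smul_smul]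
  have h2 := congrArg (fun w => ((bF F).repr w) (k.1, k.2 - 1)) h1
  simp only [map_zero, Finsupp.coe_zero, Pi.zero_apply] at h2
  rw [repr_sum_eval F c.support (fun m => c m * (m.2 : F)) (fun m => (m.1, m.2 - 1))] at h2
  rw [Finset.sum_eq_single k (fun m _ hmk => ?_) (fun habs => ?_)] at h2
  · simp only [if_pos rfl] at h2
    exact (mul_ne_zero hk hc) h2.symm
  · -- m ≠ k in support
    split
    case isTrue h =>
      obtain ⟨hm1, hm2⟩ := Prod.ext_iff.mp h
      have : m.2 = 0 := by
        by_contra hm0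
        exact hmk (Prod.ext hm1 (by omega))
      rw [this]
      simp
    case isFalse => rfl
  · exact absurd (Finsupp.notMem_support_iff.mp habs) hk

lemma central_coeff_y {z : Weyl F} (hz : ∀ b, b * z = z * b) (k : ℕ × ℕ)
    (hk : ((bF F).repr z) k ≠ 0) : p ∣ k.1 := by
  by_cases h0 : k.1 = 0
  · simp [h0]
  rw [← CharP.cast_eq_zero_iff F p]
  by_contra hc
  set c := (bF F).repr z with hc_def
  have h1 : (0 : Weyl F)
      = ∑ m ∈ c.support, (c m * (m.1 : F)) • monW F (m.1 - 1, m.2) := by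
    have e0 : (0 : Weyl F) = Wy F * z - z * Wy F := by rw [hz (Wy F), sub_self]
    rw [e0]
    conv_lhs => rw [repr_expand F z]
    rw [Finset.sum_mul, Finset.mul_sum, ← Finset.sum_sub_distrib]
    refine Finset.sum_congr rfl fun m _ => ?_
    rw [mul_smul_comm, smul_mul_assoc,
      ← smul_sub (((bF F).repr z) m) (Wy F * monW F m) (monW F m * Wy F), comm_y, smul_smul]
  have h2 := congrArg (fun w => ((bF F).repr w) (k.1 - 1, k.2)) h1
  simp only [map_zero, Finsupp.coe_zero, Pi.zero_apply] at h2
  rw [repr_sum_eval F c.support (fun m => c m * (m.1 : F)) (fun m => (m.1 - 1, m.2))] at h2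
  rw [Finset.sum_eq_single k (fun m _ hmk => ?_) (fun habs => ?_)] at h2
  · simp only [if_pos rfl] at h2
    exact (mul_ne_zero hk hc) h2.symm
  · split
    case isTrue h =>
      obtain ⟨hm1, hm2⟩ := Prod.ext_iff.mp h
      have : m.1 = 0 := by
        by_contra hm0
        exact hmk (Prod.ext (by omega) hm2)
      rw [this]
      simp
    case isFalse => rfl
  · exact absurd (Finsupp.notMem_support_iff.mp habs) hk

lemma center_mem_span {z : Weyl F} (hz : z ∈ Subalgebra.center F (Weyl F)) :
    z ∈ Submodule.span F (Set.range fun ab : ℕ × ℕ => monW F (p * ab.1, p * ab.2)) := by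
  have hzc := Subalgebra.mem_center_iff.mp hz
  nth_rewrite 1 [repr_expand F z]
  refine Submodule.sum_mem _ fun m hm => Submodule.smul_mem _ _ (Submodule.subset_span ?_)
  have hm' : ((bF F).repr z) m ≠ 0 := Finsupp.mem_support_iff.mp hm
  obtain ⟨a, ha⟩ := central_coeff_y F p hzc m hm'
  obtain ⟨b, hb⟩ := central_coeff_x F p hzc m hm'
  exact ⟨(a, b), by simp [← ha, ← hb]⟩

lemma monWp_mul (hp : p ≠ 0) (a b i j : ℕ) :
    monW F (p * a, p * b) * monW F (i, j) = monW F (p * a + i, p * b + j) := by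
  have hcen : Wy F ^ (p * b) ∈ Subalgebra.center F (Weyl F) := by
    rw [pow_mul]; exact pow_mem (yp_central F p hp) b
  have hc := Subalgebra.mem_center_iff.mp hcen (Wx F ^ i)
  show Wx F ^ (p * a) * Wy F ^ (p * b) * (Wx F ^ i * Wy F ^ j) = _
  rw [mul_assoc, ← mul_assoc (Wy F ^ (p * b)), ← hc, monW, pow_add, pow_add,
    mul_assoc, ← mul_assoc]

lemma unique_digits (hp : p ≠ 0) {a i a' i' : ℕ} (hi : i < p) (hi' : i' < p)
    (h : p * a + i = p * a' + i') : a = a' ∧ i = i' := by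
  have h1 : i = i' := by
    have h2 := congrArg (· % p) h
    simpa [Nat.mul_add_mod, Nat.mod_eq_of_lt hi, Nat.mod_eq_of_lt hi'] using h2
  refine ⟨?_, h1⟩
  subst h1
  exact Nat.eq_of_mul_eq_mul_left (Nat.pos_of_ne_zero hp) (by omega)

/-- candidate basis of the Weyl algebra over its center -/
noncomputable def wob : Fin p × Fin p → Weyl F := fun ij => monW F ((ij.1 : ℕ), (ij.2 : ℕ))

lemma spanZ (hp : p ≠ 0) :
    ⊤ ≤ Submodule.span (Subalgebra.center F (Weyl F)) (Set.range (wob F p)) := by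
  rintro w -
  have hw : w ∈ SW F := by rw [SW_top]; trivial
  induction hw using Submodule.span_induction with
  | mem v hv =>
      obtain ⟨⟨I, J⟩, rfl⟩ := hv
      have hIJ : monW F (I, J)
          = monW F (p * (I / p), p * (J / p)) * monW F (I % p, J % p) := by
        rw [monWp_mul F p hp, Nat.div_add_mod, Nat.div_add_mod]
      have hz : monW F (p * (I / p), p * (J / p)) ∈ Subalgebra.center F (Weyl F) :=
        monWp_central F p hp _ _
      have hmem : wob F p (⟨I % p, Nat.mod_lt _ (Nat.pos_of_ne_zero hp)⟩,
          ⟨J % p, Nat.mod_lt _ (Nat.pos_of_ne_zero hp)⟩)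
            ∈ Submodule.span (Subalgebra.center F (Weyl F)) (Set.range (wob F p)) :=
        Submodule.subset_span ⟨_, rfl⟩
      have := Submodule.smul_mem _ (⟨_, hz⟩ : Subalgebra.center F (Weyl F)) hmem
      rw [show (⟨_, hz⟩ : Subalgebra.center F (Weyl F)) • wob F p (⟨I % p, _⟩, ⟨J % p, _⟩)
        = monW F (p * (I / p), p * (J / p)) * monW F (I % p, J % p) from rfl] at this
      rwa [← hIJ] at this
  | zero => exact Submodule.zero_mem _
  | add a b _ _ ha hb => exact Submodule.add_mem _ ha hb
  | smul r v _ hv =>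
      have hr : r • v = (⟨algebraMap F (Weyl F) r,
          Subalgebra.algebraMap_mem _ r⟩ : Subalgebra.center F (Weyl F)) • v := by
        show r • v = algebraMap F (Weyl F) r * v
        rw [Algebra.smul_def]
      rw [hr]
      exact Submodule.smul_mem _ _ hv

lemma liZ (hp : p ≠ 0) :
    LinearIndependent (Subalgebra.center F (Weyl F)) (wob F p) := by
  refine (Fintype.linearIndependent_iff (R := Subalgebra.center F (Weyl F)) (M := Weyl F)
    (v := wob F p)).mpr ?_
  intro g hg ij0
  have hmem : ∀ ij : Fin p × Fin p, ∃ c : ℕ × ℕ →₀ F,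
      (c.sum fun k a => a • monW F (p * k.1, p * k.2)) = (g ij : Weyl F) :=
    fun ij => Finsupp.mem_span_range_iff_exists_finsupp.mp
      (center_mem_span F p (g ij).2)
  choose c hc using hmem
  -- main sum identity
  have hsum : (0 : Weyl F) = ∑ ij : Fin p × Fin p, ∑ k ∈ (c ij).support,
      (c ij) k • monW F (p * k.1 + (ij.1 : ℕ), p * k.2 + (ij.2 : ℕ)) := by
    rw [← hg]
    refine Finset.sum_congr rfl fun ij _ => ?_
    have h1 : g ij • wob F p ij = (g ij : Weyl F) * monW F ((ij.1 : ℕ), (ij.2 : ℕ)) := rfl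
    rw [h1, ← hc ij, Finsupp.sum, Finset.sum_mul]
    refine Finset.sum_congr rfl fun k _ => ?_
    rw [smul_mul_assoc, monWp_mul F p hp]
  suffices hc0 : c ij0 = 0 by
    have : (g ij0 : Weyl F) = 0 := by rw [← hc ij0, hc0, Finsupp.sum_zero_index]
    exact Subtype.ext this
  ext k0
  rw [Finsupp.coe_zero, Pi.zero_apply]
  by_contra hk0
  have hk0' : k0 ∈ (c ij0).support := Finsupp.mem_support_iff.mpr hk0
  set m0 : ℕ × ℕ := (p * k0.1 + (ij0.1 : ℕ), p * k0.2 + (ij0.2 : ℕ)) with hm0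
  have h2 := congrArg (fun w => ((bF F).repr w) m0) hsum
  simp only [map_zero, Finsupp.coe_zero, Pi.zero_apply] at h2
  rw [map_sum, Finsupp.finset_sum_apply] at h2
  have h3 : ∀ ij : Fin p × Fin p,
      ((bF F).repr (∑ k ∈ (c ij).support,
        (c ij) k • monW F (p * k.1 + (ij.1 : ℕ), p * k.2 + (ij.2 : ℕ)))) m0
      = ∑ k ∈ (c ij).support,
          (if ((p * k.1 + (ij.1 : ℕ), p * k.2 + (ij.2 : ℕ)) : ℕ × ℕ) = m0
            then (c ij) k else 0) :=
    fun ij => repr_sum_eval F _ _ (fun k => (p * k.1 + (ij.1 : ℕ), p * k.2 + (ij.2 : ℕ))) m0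
  simp only [h3] at h2
  rw [Finset.sum_eq_single_of_mem ij0 (Finset.mem_univ _) ?other] at h2
  · rw [Finset.sum_eq_single_of_mem k0 hk0' ?inner] at h2
    · rw [if_pos rfl] at h2
      exact hk0 h2.symm
    case inner =>
      intro k _ hkk0
      rw [if_neg]
      intro habs
      obtain ⟨he1, he2⟩ := Prod.ext_iff.mp habs
      obtain ⟨ha1, -⟩ := unique_digits p hp ij0.1.isLt ij0.1.isLt he1
      obtain ⟨ha2, -⟩ := unique_digits p hp ij0.2.isLt ij0.2.isLt he2
      exact hkk0 (Prod.ext ha1 ha2)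
  case other =>
    intro ij _ hij
    refine Finset.sum_eq_zero fun k _ => ?_
    rw [if_neg]
    intro habs
    obtain ⟨he1, he2⟩ := Prod.ext_iff.mp habs
    obtain ⟨-, hi1⟩ := unique_digits p hp ij.1.isLt ij0.1.isLt he1
    obtain ⟨-, hi2⟩ := unique_digits p hp ij.2.isLt ij0.2.isLt he2
    exact hij (Prod.ext (Fin.ext hi1) (Fin.ext hi2))

lemma center_eq_adjoin (hp : p ≠ 0) :
    Subalgebra.center F (Weyl F) = Algebra.adjoin F {Wx F ^ p, Wy F ^ p} := by
  refine le_antisymm ?_ (adjoin_le_center F p hp)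
  intro z hz
  have h1 := center_mem_span F p hz
  have h2 : Submodule.span F (Set.range fun ab : ℕ × ℕ => monW F (p * ab.1, p * ab.2))
      ≤ Subalgebra.toSubmodule (Algebra.adjoin F {Wx F ^ p, Wy F ^ p}) := by
    rw [Submodule.span_le]
    rintro v ⟨⟨a, b⟩, rfl⟩
    show monW F (p * a, p * b) ∈ Algebra.adjoin F {Wx F ^ p, Wy F ^ p}
    have : monW F (p * a, p * b) = (Wx F ^ p) ^ a * (Wy F ^ p) ^ b := by
      rw [monW, ← pow_mul, ← pow_mul]
    rw [this]
    exact mul_mem (pow_mem (Algebra.subset_adjoin (by left; rfl)) a)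
      (pow_mem (Algebra.subset_adjoin (by right; rfl)) b)
  exact h2 h1

/-- the basis over the center -/
noncomputable def bZ (hp : p ≠ 0) :
    Module.Basis (Fin p × Fin p) (Subalgebra.center F (Weyl F)) (Weyl F) :=
  myBasis (liZ F p hp) (spanZ F p hp)

lemma bZ_apply (hp : p ≠ 0) (ij : Fin p × Fin p) :
    bZ F p hp ij = Wx F ^ (ij.1 : ℕ) * Wy F ^ (ij.2 : ℕ) := by
  rw [bZ, myBasis_apply]
  rfl

end WeylAux


/-- In characteristic p > 0, the Weyl algebra is free over its center
Z(A₁) = F[x^p, y^p], with basis {x^i y^j : 0 ≤ i, j < p}. -/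
theorem weyl_free_over_center (F : Type) [Field F] (p : ℕ) (hp : p ≠ 0) [CharP F p] :
    Subalgebra.center F (Weyl F) =
        Algebra.adjoin F {Wx F ^ p, Wy F ^ p} ∧
      ∃ b : Module.Basis (Fin p × Fin p) (Subalgebra.center F (Weyl F)) (Weyl F),
        ∀ ij : Fin p × Fin p, b ij = Wx F ^ (ij.1 : ℕ) * Wy F ^ (ij.2 : ℕ) := by
  exact ⟨WeylAux.center_eq_adjoin F p hp, ⟨WeylAux.bZ F p hp, WeylAux.bZ_apply F p hp⟩⟩
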